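/- arXiv:2404.05808 — 4 statements merged into one kernel-verified Lean document; each statement's English description precedes it below -/
import Mathlib

section
/- Let H be the set of non-increasing probability density functions on (0,1), i.e., measurable functions g : (0,1) → [0,∞) with ∫₀¹ g(y) dy = 1 that agree almost everywhere with a non-increasing function. Then H is complete with respect to the Hellinger distance: every sequence (gₙ) in H that is Cauchy with respect to d_H converges in d_H to some g ∈ H. -/
open MeasureTheory

/-- The Hellinger distance between two density functions on (0,1):
`d_H(g₁,g₂) = sqrt( (1/2) ∫₀¹ (√g₁(y) - √g₂(y))² dy )`. -/
noncomputable def hellingerDist (g₁ g₂ : ℝ → ℝ) : ℝ :=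
  Real.sqrt ((1 / 2) * ∫ y in Set.Ioo (0 : ℝ) 1, (Real.sqrt (g₁ y) - Real.sqrt (g₂ y)) ^ 2)

/-- `g` belongs to the class `H` of non-increasing probability density functions on (0,1):
it is measurable, nonnegative on (0,1), integrates to 1 over (0,1), and agrees
Lebesgue-almost everywhere on (0,1) with a non-increasing function. -/
def MemH (g : ℝ → ℝ) : Prop :=
  Measurable g ∧ (∀ y ∈ Set.Ioo (0 : ℝ) 1, 0 ≤ g y) ∧
    IntegrableOn g (Set.Ioo (0 : ℝ) 1) ∧
    (∫ y in Set.Ioo (0 : ℝ) 1, g y) = 1 ∧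
    ∃ g' : ℝ → ℝ,
      (∀ x ∈ Set.Ioo (0 : ℝ) 1, ∀ y ∈ Set.Ioo (0 : ℝ) 1, x ≤ y → g' y ≤ g' x) ∧
      (∀ᵐ y ∂(volume.restrict (Set.Ioo (0 : ℝ) 1)), g y = g' y)

lemma l2_norm_sq {μ : Measure ℝ} (A : Lp ℝ 2 μ) : ‖A‖ ^ 2 = ∫ y, (A y) ^ 2 ∂μ := by
  rw [← real_inner_self_eq_norm_sq]
  rw [L2.inner_def (𝕜 := ℝ) A A]
  simp [RCLike.inner_apply, sq]

lemma dist_sq_eq {μ : Measure ℝ} (A B : Lp ℝ 2 μ) :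
    ∫ y, (A y - B y) ^ 2 ∂μ = dist A B ^ 2 := by
  rw [dist_eq_norm, l2_norm_sq (A - B)]
  refine integral_congr_ae ?_
  filter_upwards [Lp.coeFn_sub A B] with y hy
  show (A y - B y) ^ 2 = ((A - B : Lp ℝ 2 μ) y) ^ 2
  rw [hy, Pi.sub_apply]

lemma hellinger_eq {φ ψ : ℝ → ℝ} (A B : Lp ℝ 2 (volume.restrict (Set.Ioo (0:ℝ) 1)))
    (hA : (fun y => Real.sqrt (φ y)) =ᵐ[volume.restrict (Set.Ioo (0:ℝ) 1)] A)
    (hB : (fun y => Real.sqrt (ψ y)) =ᵐ[volume.restrict (Set.Ioo (0:ℝ) 1)] B) :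
    hellingerDist φ ψ = Real.sqrt (1 / 2) * dist A B := by
  unfold hellingerDist
  have h : (∫ y in Set.Ioo (0:ℝ) 1, (Real.sqrt (φ y) - Real.sqrt (ψ y)) ^ 2)
      = ∫ y, (A y - B y) ^ 2 ∂(volume.restrict (Set.Ioo (0:ℝ) 1)) := by
    refine integral_congr_ae ?_
    filter_upwards [hA, hB] with y h1 h2
    rw [h1, h2]
  rw [h, dist_sq_eq, Real.sqrt_mul (by norm_num : (0:ℝ) ≤ 1/2), Real.sqrt_sq dist_nonneg]

/-- The class `H` of non-increasing probability densities on (0,1) is complete with respect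
to the Hellinger distance: every Cauchy sequence in `H` converges in Hellinger distance to
an element of `H`. -/
theorem H_complete_hellinger (g : ℕ → ℝ → ℝ) (hg : ∀ n, MemH (g n))
    (hcauchy : ∀ ε > 0, ∃ N : ℕ, ∀ m ≥ N, ∀ n ≥ N, hellingerDist (g m) (g n) < ε) :
    ∃ glim : ℝ → ℝ, MemH glim ∧
      Filter.Tendsto (fun n => hellingerDist (g n) glim) Filter.atTop (nhds 0) := by
  classical
  set μ : Measure ℝ := volume.restrict (Set.Ioo (0:ℝ) 1) with hμ
  set f : ℕ → ℝ → ℝ := fun n y => Real.sqrt (g n y) with hf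
  -- a.e. membership in Ioo
  have haeIoo : ∀ᵐ y ∂μ, y ∈ Set.Ioo (0:ℝ) 1 := ae_restrict_mem measurableSet_Ioo
  -- square of f equals g a.e.
  have hfsq : ∀ n, (fun y => (f n y) ^ 2) =ᵐ[μ] g n := by
    intro n
    filter_upwards [haeIoo] with y hy
    exact Real.sq_sqrt ((hg n).2.1 y hy)
  have hmem : ∀ n, MemLp (f n) 2 μ := by
    intro n
    refine (memLp_two_iff_integrable_sq ?_).2 ?_
    · exact (Real.continuous_sqrt.measurable.comp (hg n).1).aestronglyMeasurable
    · exact ((hg n).2.2.1).congr (hfsq n).symm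
  set F : ℕ → Lp ℝ 2 μ := fun n => (hmem n).toLp (f n) with hF
  have hcoeF : ∀ n, (fun y => Real.sqrt (g n y)) =ᵐ[μ] F n := fun n =>
    (MemLp.coeFn_toLp (hmem n)).symm
  -- norms are 1
  have hnorm : ∀ n, ‖F n‖ = 1 := by
    intro n
    have h1 : ∫ y, (F n y) ^ 2 ∂μ = 1 := by
      have h2 : (fun y => ((F n : ℝ → ℝ) y) ^ 2) =ᵐ[μ] g n := by
        filter_upwards [hcoeF n, hfsq n] with y hy hy2
        rw [← hy]; exact hy2
      rw [integral_congr_ae h2]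
      exact (hg n).2.2.2.1
    have h3 : ‖F n‖ ^ 2 = 1 := (l2_norm_sq (F n)).trans h1
    nlinarith [norm_nonneg (F n)]
  -- Cauchy
  have hsqrt_half_pos : (0:ℝ) < Real.sqrt (1/2) := Real.sqrt_pos.2 (by norm_num)
  have hdist_eq : ∀ m n, hellingerDist (g m) (g n) = Real.sqrt (1/2) * dist (F m) (F n) :=
    fun m n => hellinger_eq (F m) (F n) (hcoeF m) (hcoeF n)
  have hcs : CauchySeq F := by
    rw [Metric.cauchySeq_iff]
    intro ε hε
    obtain ⟨N, hN⟩ := hcauchy (Real.sqrt (1/2) * ε) (by positivity)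
    refine ⟨N, fun m hm n hn => ?_⟩
    have := hN m hm n hn
    rw [hdist_eq m n] at this
    exact lt_of_mul_lt_mul_left this hsqrt_half_pos.le
  obtain ⟨Finf, hFinf⟩ := cauchySeq_tendsto_of_complete hcs
  -- subsequence converging a.e.
  haveI : Fact ((1:ENNReal) ≤ 2) := ⟨one_le_two⟩
  obtain ⟨ns, hns_mono, hae⟩ :=
    (tendstoInMeasure_of_tendsto_Lp hFinf).exists_seq_tendsto_ae
  have hcoe_all : ∀ᵐ x ∂μ, ∀ n, (F n : ℝ → ℝ) x = Real.sqrt (g n x) :=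
    ae_all_iff.2 fun n => (hcoeF n).symm
  -- a.e. tendsto of sqrt g (ns i)
  have hsqrt_tendsto : ∀ᵐ x ∂μ,
      Filter.Tendsto (fun i => Real.sqrt (g (ns i) x)) Filter.atTop (nhds ((Finf : ℝ → ℝ) x)) := by
    filter_upwards [hae, hcoe_all] with x h1 h2
    have : (fun i => Real.sqrt (g (ns i) x)) = fun i => (F (ns i) : ℝ → ℝ) x := by
      funext i; exact (h2 (ns i)).symm
    rw [this]; exact h1
  have hFpos : ∀ᵐ x ∂μ, 0 ≤ (Finf : ℝ → ℝ) x := by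
    filter_upwards [hsqrt_tendsto] with x hx
    exact ge_of_tendsto' hx fun i => Real.sqrt_nonneg _
  -- monotone representatives
  have hgm : ∀ n, ∃ g' : ℝ → ℝ,
      (∀ x ∈ Set.Ioo (0 : ℝ) 1, ∀ y ∈ Set.Ioo (0 : ℝ) 1, x ≤ y → g' y ≤ g' x) ∧
      (∀ᵐ y ∂μ, g n y = g' y) := fun n => (hg n).2.2.2.2
  set gm : ℕ → ℝ → ℝ := fun n => (hgm n).choose with hgmdef
  have hgm_anti : ∀ n, ∀ x ∈ Set.Ioo (0 : ℝ) 1, ∀ y ∈ Set.Ioo (0 : ℝ) 1, x ≤ y →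
      gm n y ≤ gm n x := fun n => (hgm n).choose_spec.1
  have hgm_ae : ∀ᵐ x ∂μ, ∀ n, g n x = gm n x := ae_all_iff.2 fun n => (hgm n).choose_spec.2
  -- the limit density
  set glim : ℝ → ℝ := fun y => if y ∈ Set.Ioo (0:ℝ) 1 then ((Finf : ℝ → ℝ) y) ^ 2 else 0
    with hglimdef
  have hglim_eq : glim =ᵐ[μ] fun y => ((Finf : ℝ → ℝ) y) ^ 2 := by
    filter_upwards [haeIoo] with y hy
    simp only [hglimdef]
    exact if_pos hy
  have hsqrt_glim : (fun y => Real.sqrt (glim y)) =ᵐ[μ] Finf := by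
    filter_upwards [hglim_eq, hFpos] with y h1 h2
    rw [h1, Real.sqrt_sq h2]
  -- the good set S
  set S : Set ℝ := {x | x ∈ Set.Ioo (0:ℝ) 1 ∧
      Filter.Tendsto (fun i => Real.sqrt (g (ns i) x)) Filter.atTop (nhds ((Finf : ℝ → ℝ) x)) ∧
      (∀ n, g n x = gm n x)} with hSdef
  have hS : ∀ᵐ x ∂μ, x ∈ S := by
    filter_upwards [haeIoo, hsqrt_tendsto, hgm_ae] with x h1 h2 h3
    exact ⟨h1, h2, h3⟩
  have hSsub : S ⊆ Set.Ioo (0:ℝ) 1 := fun x hx => hx.1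
  -- glim is "antitone" on S
  have hSmono : ∀ x ∈ S, ∀ y ∈ S, x ≤ y → glim y ≤ glim x := by
    intro x hx y hy hxy
    have hgx : Filter.Tendsto (fun i => g (ns i) x) Filter.atTop (nhds (glim x)) := by
      have h := hx.2.1.pow 2
      have he : (fun i => Real.sqrt (g (ns i) x) ^ 2) = fun i => g (ns i) x := by
        funext i; exact Real.sq_sqrt ((hg (ns i)).2.1 x hx.1)
      rw [he] at h
      have : glim x = ((Finf : ℝ → ℝ) x) ^ 2 := by
        simp only [hglimdef]; exact if_pos hx.1
      rw [this]; exact h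
    have hgy : Filter.Tendsto (fun i => g (ns i) y) Filter.atTop (nhds (glim y)) := by
      have h := hy.2.1.pow 2
      have he : (fun i => Real.sqrt (g (ns i) y) ^ 2) = fun i => g (ns i) y := by
        funext i; exact Real.sq_sqrt ((hg (ns i)).2.1 y hy.1)
      rw [he] at h
      have : glim y = ((Finf : ℝ → ℝ) y) ^ 2 := by
        simp only [hglimdef]; exact if_pos hy.1
      rw [this]; exact h
    refine le_of_tendsto_of_tendsto' hgy hgx fun i => ?_
    rw [hx.2.2 (ns i), hy.2.2 (ns i)]
    exact hgm_anti (ns i) x hx.1 y hy.1 hxy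
  -- S meets every subinterval
  have hSne : ∀ a b : ℝ, 0 ≤ a → a < b → b ≤ 1 → (S ∩ Set.Ioo a b).Nonempty := by
    intro a b ha hab hb
    rw [Set.nonempty_iff_ne_empty]
    intro hemp
    have hsub : Set.Ioo a b ⊆ Sᶜ := by
      intro x hx hxS
      have hmem2 : x ∈ S ∩ Set.Ioo a b := ⟨hxS, hx⟩
      rw [hemp] at hmem2
      exact hmem2
    have hμS : μ Sᶜ = 0 := ae_iff.1 hS
    have h1 : μ (Set.Ioo a b) = 0 := le_antisymm ((measure_mono hsub).trans hμS.le) (zero_le')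
    have h2 : μ (Set.Ioo a b) = ENNReal.ofReal (b - a) := by
      rw [hμ, Measure.restrict_apply measurableSet_Ioo,
        Set.inter_eq_self_of_subset_left (Set.Ioo_subset_Ioo ha hb), Real.volume_Ioo]
    rw [h2] at h1
    simp only [ENNReal.ofReal_eq_zero] at h1
    linarith
  -- the monotone representative
  set g' : ℝ → ℝ := fun x => sSup (glim '' (S ∩ Set.Ioi x)) with hg'def
  have hbdd : ∀ x ∈ Set.Ioo (0:ℝ) 1, BddAbove (glim '' (S ∩ Set.Ioi x)) := by
    intro x hx
    obtain ⟨s, hsS, hs⟩ := hSne 0 x le_rfl hx.1 hx.2.le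
    refine ⟨glim s, ?_⟩
    rintro _ ⟨t, ⟨htS, htx⟩, rfl⟩
    exact hSmono s hsS t htS (hs.2.le.trans (le_of_lt htx))
  have hne' : ∀ x ∈ Set.Ioo (0:ℝ) 1, (glim '' (S ∩ Set.Ioi x)).Nonempty := by
    intro x hx
    obtain ⟨t, htS, ht⟩ := hSne x 1 hx.1.le hx.2 le_rfl
    exact ⟨glim t, t, ⟨htS, ht.1⟩, rfl⟩
  have hanti : ∀ x ∈ Set.Ioo (0 : ℝ) 1, ∀ y ∈ Set.Ioo (0 : ℝ) 1, x ≤ y → g' y ≤ g' x := by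
    intro x hx y hy hxy
    exact csSup_le_csSup (hbdd x hx) (hne' y hy)
      (Set.image_mono (Set.inter_subset_inter_right _ (Set.Ioi_subset_Ioi hxy)))
  have hle : ∀ x ∈ S, g' x ≤ glim x := by
    intro x hx
    refine csSup_le (hne' x (hSsub hx)) ?_
    rintro _ ⟨t, ⟨htS, htx⟩, rfl⟩
    exact hSmono x hx t htS (le_of_lt htx)
  have hgeS : ∀ x ∈ S, ∀ y ∈ S, x < y → glim y ≤ g' x := by
    intro x hx y hy hxy
    exact le_csSup (hbdd x (hSsub hx)) ⟨y, ⟨hy, hxy⟩, rfl⟩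
  -- the exceptional set is countable
  set D : Set ℝ := {x | x ∈ S ∧ g' x < glim x} with hDdef
  have hq : ∀ x : D, ∃ q : ℚ, g' (x:ℝ) < (q:ℝ) ∧ (q:ℝ) < glim (x:ℝ) := fun x =>
    exists_rat_btwn x.2.2
  choose q hq1 hq2 using hq
  have hDcount : D.Countable := by
    rw [← Set.countable_coe_iff]
    refine Function.Injective.countable (f := q) ?_
    intro a b hab
    by_contra hne
    have hne2 : (a:ℝ) ≠ (b:ℝ) := fun h => hne (Subtype.ext h)
    rcases hne2.lt_or_gt with h | h
    · have h1 : glim (b:ℝ) ≤ g' (a:ℝ) := hgeS _ a.2.1 _ b.2.1 h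
      have h2 := hq1 a
      have h3 := hq2 b
      rw [hab] at h2
      linarith
    · have h1 : glim (a:ℝ) ≤ g' (b:ℝ) := hgeS _ b.2.1 _ a.2.1 h
      have h2 := hq2 a
      have h3 := hq1 b
      rw [hab] at h2
      linarith
  have hD0 : μ D = 0 := by
    have h1 : volume D = 0 := hDcount.measure_zero volume
    rw [hμ, Measure.restrict_apply' measurableSet_Ioo]
    exact le_antisymm ((measure_mono (Set.inter_subset_left)).trans h1.le) (zero_le')
  have hDae : ∀ᵐ x ∂μ, x ∉ D := measure_eq_zero_iff_ae_notMem.1 hD0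
  have hglim_g' : ∀ᵐ y ∂μ, glim y = g' y := by
    filter_upwards [hS, hDae] with x hxS hxD
    have h1 : g' x ≤ glim x := hle x hxS
    have h2 : ¬ (g' x < glim x) := fun h => hxD ⟨hxS, h⟩
    linarith
  -- assemble MemH
  have hglim_meas : Measurable glim := by
    refine Measurable.ite measurableSet_Ioo ?_ measurable_const
    exact ((Lp.stronglyMeasurable Finf).measurable).pow_const 2
  have hFinf_sq_int : Integrable (fun y => ((Finf : ℝ → ℝ) y) ^ 2) μ :=
    (memLp_two_iff_integrable_sq (Lp.aestronglyMeasurable Finf)).1 (Lp.memLp Finf)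
  have hnormFinf : ‖Finf‖ = 1 := by
    have h1 : Filter.Tendsto (fun n => ‖F n‖) Filter.atTop (nhds ‖Finf‖) := hFinf.norm
    have h2 : (fun n => ‖F n‖) = fun _ => (1:ℝ) := funext hnorm
    rw [h2] at h1
    exact (tendsto_const_nhds_iff.1 h1).symm
  have hint_glim : (∫ y, glim y ∂μ) = 1 := by
    have h1 : (∫ y, glim y ∂μ) = ∫ y, ((Finf : ℝ → ℝ) y) ^ 2 ∂μ := integral_congr_ae hglim_eq
    have h2 : ∫ y, ((Finf : ℝ → ℝ) y) ^ 2 ∂μ = ‖Finf‖ ^ 2 := (l2_norm_sq Finf).symm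
    rw [h1, h2, hnormFinf]; norm_num
  refine ⟨glim, ⟨hglim_meas, ?_, ?_, hint_glim, g', hanti, hglim_g'⟩, ?_⟩
  · intro y hy
    simp only [hglimdef]
    rw [if_pos hy]
    positivity
  · exact hFinf_sq_int.congr hglim_eq.symm
  · have heq : ∀ n, hellingerDist (g n) glim = Real.sqrt (1/2) * dist (F n) Finf :=
      fun n => hellinger_eq (F n) Finf (hcoeF n) hsqrt_glim
    have hd : Filter.Tendsto (fun n => dist (F n) Finf) Filter.atTop (nhds 0) :=
      tendsto_iff_dist_tendsto_zero.1 hFinf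
    have := hd.const_mul (Real.sqrt (1/2))
    simp only [mul_zero] at this
    simpa only [heq] using this
end

section
/- Let (Ω, F, P) be a probability space, m ≥ 1, and for j = 1, …, m let θ_j : Ω → {0,1} be F-measurable random variables (θ_j = 1 indicating that null hypothesis H_{0j} is true). Let G ⊆ F be a sub-σ-algebra and T_j = E[θ_j | G] (the replicability local index of significance). Let δ_j : Ω → {0,1} be G-measurable rejection indicators, R = Σ_{j=1}^m δ_j the number of rejections and V = Σ_{j=1}^m δ_j θ_j the number of false rejections. Then (a) E[V / max(R,1)] = E[(Σ_{j=1}^m δ_j T_j) / max(R,1)]; and (b) if moreover Σ_{j=1}^m δ_j T_j ≤ q · R holds almost surely for some q ∈ [0,1], then the false discovery rate satisfies FDR = E[V / max(R,1)] ≤ q. -/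
open MeasureTheory

/-- Oracle FDR control via the local index of significance.  Let `θ j` be `{0,1}`-valued
indicators that hypothesis `j` is null, `G` a sub-σ-algebra (the data), `T j = E[θ j | G]`
the posterior probability of being null, and `δ j` `G`-measurable `{0,1}`-valued rejection
indicators with `R = Σ δ j` rejections and `V = Σ δ j θ j` false rejections.  Then
(a) `E[V / max(R,1)] = E[(Σ δ j T j) / max(R,1)]`, and
(b) if `Σ δ j T j ≤ q R` almost surely for some `q ∈ [0,1]`, then the false discovery
rate `E[V / max(R,1)]` is at most `q`. -/
theorem oracle_fdr_control {Ω : Type*} [m0 : MeasurableSpace Ω]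
    (P : Measure Ω) [IsProbabilityMeasure P]
    (m : ℕ) (θ : Fin m → Ω → ℝ)
    (hθmeas : ∀ j, Measurable (θ j)) (hθ01 : ∀ j ω, θ j ω = 0 ∨ θ j ω = 1)
    (G : MeasurableSpace Ω) (hG : G ≤ m0)
    (δ : Fin m → Ω → ℝ) (hδmeas : ∀ j, Measurable[G] (δ j))
    (hδ01 : ∀ j ω, δ j ω = 0 ∨ δ j ω = 1)
    (T : Fin m → Ω → ℝ) (hT : ∀ j, T j = P[θ j|G])
    (R V : Ω → ℝ) (hR : R = fun ω => ∑ j, δ j ω)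
    (hV : V = fun ω => ∑ j, δ j ω * θ j ω) (q : ℝ) :
    (∫ ω, V ω / max (R ω) 1 ∂P) = (∫ ω, (∑ j, δ j ω * T j ω) / max (R ω) 1 ∂P) ∧
    (0 ≤ q → q ≤ 1 → (∀ᵐ ω ∂P, (∑ j, δ j ω * T j ω) ≤ q * R ω) →
      (∫ ω, V ω / max (R ω) 1 ∂P) ≤ q) := by
  have hmaxpos : ∀ ω, (0:ℝ) < max (R ω) 1 := fun ω => lt_of_lt_of_le one_pos (le_max_right _ _)
  -- f j : the G-measurable weight
  set f : Fin m → Ω → ℝ := fun j ω => δ j ω / max (R ω) 1 with hf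
  have hδ_bound : ∀ j ω, 0 ≤ δ j ω ∧ δ j ω ≤ 1 := by
    intro j ω; rcases hδ01 j ω with h | h <;> simp [h]
  have hθ_bound : ∀ j ω, 0 ≤ θ j ω ∧ θ j ω ≤ 1 := by
    intro j ω; rcases hθ01 j ω with h | h <;> simp [h]
  have hRmeasG : Measurable[G] R := by
    rw [hR]; exact Finset.measurable_sum _ fun j _ => hδmeas j
  have hfmeasG : ∀ j, Measurable[G] (f j) := by
    intro j
    exact (hδmeas j).div ((hRmeasG.max measurable_const))
  have hfmeas : ∀ j, @Measurable Ω ℝ m0 _ (f j) := fun j => (hfmeasG j).mono hG le_rfl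
  have hf_bound : ∀ j ω, 0 ≤ f j ω ∧ f j ω ≤ 1 := by
    intro j ω
    constructor
    · exact div_nonneg (hδ_bound j ω).1 (hmaxpos ω).le
    · rw [div_le_one (hmaxpos ω)]
      exact (hδ_bound j ω).2.trans (le_max_right _ _)
  have hθint : ∀ j, Integrable (θ j) P := by
    intro j
    refine (integrable_const (1:ℝ)).mono' (hθmeas j).aestronglyMeasurable ?_
    filter_upwards with ω
    rw [Real.norm_eq_abs, abs_le]
    exact ⟨by linarith [(hθ_bound j ω).1], (hθ_bound j ω).2⟩
  have hT_nonneg : ∀ j, 0 ≤ᵐ[P] T j := by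
    intro j; rw [hT j]
    exact condExp_nonneg (Filter.Eventually.of_forall fun ω => (hθ_bound j ω).1)
  have hT_le_one : ∀ j, T j ≤ᵐ[P] fun _ => (1:ℝ) := by
    intro j; rw [hT j]
    have h1 : P[(fun _ => (1:ℝ))|G] = fun _ => (1:ℝ) := condExp_const hG 1
    calc P[θ j|G] ≤ᵐ[P] P[(fun _ => (1:ℝ))|G] :=
          condExp_mono (hθint j) (integrable_const 1)
            (Filter.Eventually.of_forall fun ω => (hθ_bound j ω).2)
      _ = fun _ => (1:ℝ) := h1
  have hTmeas : ∀ j, AEStronglyMeasurable[m0] (T j) P := by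
    intro j; rw [hT j]
    exact (stronglyMeasurable_condExp.mono hG).aestronglyMeasurable
  -- integrability of f j * θ j and f j * T j
  have hfθint : ∀ j, Integrable (fun ω => f j ω * θ j ω) P := by
    intro j
    refine (integrable_const (1:ℝ)).mono'
      (((hfmeas j).mul (hθmeas j)).aestronglyMeasurable) ?_
    filter_upwards with ω
    rw [Real.norm_eq_abs, abs_mul,
      abs_of_nonneg (hf_bound j ω).1, abs_of_nonneg (hθ_bound j ω).1]
    exact mul_le_one₀ (hf_bound j ω).2 (hθ_bound j ω).1 (hθ_bound j ω).2
  have hfTint : ∀ j, Integrable (fun ω => f j ω * T j ω) P := by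
    intro j
    refine (integrable_const (1:ℝ)).mono'
      ((hfmeas j).aestronglyMeasurable.mul (hTmeas j) :
        AEStronglyMeasurable[m0] (fun ω => f j ω * T j ω) P) ?_
    filter_upwards [hT_nonneg j, hT_le_one j] with ω h0 h1
    rw [Real.norm_eq_abs, abs_mul,
      abs_of_nonneg (hf_bound j ω).1, abs_of_nonneg h0]
    exact mul_le_one₀ (hf_bound j ω).2 h0 h1
  -- key identity
  have hkey : ∀ j, ∫ ω, f j ω * θ j ω ∂P = ∫ ω, f j ω * T j ω ∂P := by
    intro j
    have hmul : P[f j * θ j|G] =ᵐ[P] f j * P[θ j|G] :=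
      condExp_mul_of_stronglyMeasurable_left (hfmeasG j).stronglyMeasurable (hfθint j) (hθint j)
    have hmul' : ∀ᵐ ω ∂P, (P[f j * θ j|G]) ω = f j ω * (P[θ j|G]) ω := hmul
    calc ∫ ω, f j ω * θ j ω ∂P = ∫ ω, (P[f j * θ j|G]) ω ∂P := (integral_condExp hG).symm
      _ = ∫ ω, f j ω * (P[θ j|G]) ω ∂P := integral_congr_ae hmul'
      _ = ∫ ω, f j ω * T j ω ∂P := by rw [hT j]
  have ha : (∫ ω, V ω / max (R ω) 1 ∂P) = (∫ ω, (∑ j, δ j ω * T j ω) / max (R ω) 1 ∂P) := by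
    have e1 : ∀ ω, V ω / max (R ω) 1 = ∑ j, f j ω * θ j ω := by
      intro ω; rw [hV]; simp only [hf]
      rw [Finset.sum_div]
      exact Finset.sum_congr rfl fun j _ => by ring
    have e2 : ∀ ω, (∑ j, δ j ω * T j ω) / max (R ω) 1 = ∑ j, f j ω * T j ω := by
      intro ω; simp only [hf]
      rw [Finset.sum_div]
      exact Finset.sum_congr rfl fun j _ => by ring
    simp_rw [e1, e2]
    rw [integral_finset_sum _ fun j _ => hfθint j,
      integral_finset_sum _ fun j _ => hfTint j]
    exact Finset.sum_congr rfl fun j _ => hkey j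
  refine ⟨ha, fun hq0 _ hqle => ?_⟩
  rw [ha]
  have hgint : Integrable (fun ω => (∑ j, δ j ω * T j ω) / max (R ω) 1) P := by
    have e2 : ∀ ω, (∑ j, δ j ω * T j ω) / max (R ω) 1 = ∑ j, f j ω * T j ω := by
      intro ω; simp only [hf]; rw [Finset.sum_div]
      exact Finset.sum_congr rfl fun j _ => by ring
    simp_rw [e2]
    exact integrable_finset_sum _ fun j _ => hfTint j
  have hbound : ∀ᵐ ω ∂P, (∑ j, δ j ω * T j ω) / max (R ω) 1 ≤ q := by
    filter_upwards [hqle] with ω hω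
    rw [div_le_iff₀ (hmaxpos ω)]
    refine hω.trans ?_
    have hR0 : R ω ≤ max (R ω) 1 := le_max_left _ _
    nlinarith
  calc ∫ ω, (∑ j, δ j ω * T j ω) / max (R ω) 1 ∂P ≤ ∫ _, q ∂P :=
        integral_mono_ae hgint (integrable_const q) hbound
    _ = q := by simp
end

section
/- Let t, t̂ : ℕ → ℝ with t non-decreasing and 0 ≤ t_j ≤ 1 for all j, and let 1 ≤ R < R̂ be integers. Then t_{R+1} − (1/R) Σ_{j=1}^{R} t_j ≥ 0, and |(1/R̂) Σ_{j=1}^{R̂} t̂_j − (1/R) Σ_{j=1}^{R} t_j| ≥ (1 − R/R̂) · (t_{R+1} − (1/R) Σ_{j=1}^{R} t_j) − (1/R̂) |Σ_{j=1}^{R̂} (t̂_j − t_j)|. -/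
open Finset

/-- Deterministic inequality comparing the averages of the `R` smallest oracle statistics
and the `R̂` smallest plug-in statistics when `R < R̂`: for a non-decreasing `[0,1]`-valued
sequence `t` and arbitrary `t̂`, one has `t (R+1) − (1/R) Σ_{j=1}^R t j ≥ 0` and
`|(1/R̂) Σ_{j=1}^{R̂} t̂ j − (1/R) Σ_{j=1}^R t j|
   ≥ (1 − R/R̂) (t (R+1) − (1/R) Σ_{j=1}^R t j) − (1/R̂) |Σ_{j=1}^{R̂} (t̂ j − t j)|`. -/
theorem sorted_average_gap_lower_bound
    (t that : ℕ → ℝ) (hmono : ∀ j k, 1 ≤ j → j ≤ k → t j ≤ t k)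
    (hbound : ∀ j, 1 ≤ j → 0 ≤ t j ∧ t j ≤ 1)
    (R Rhat : ℕ) (hR : 1 ≤ R) (hRRhat : R < Rhat) :
    0 ≤ t (R + 1) - (1 / (R : ℝ)) * ∑ j ∈ Finset.Icc 1 R, t j ∧
    (1 - (R : ℝ) / (Rhat : ℝ)) *
        (t (R + 1) - (1 / (R : ℝ)) * ∑ j ∈ Finset.Icc 1 R, t j)
      - (1 / (Rhat : ℝ)) * |∑ j ∈ Finset.Icc 1 Rhat, (that j - t j)|
      ≤ |(1 / (Rhat : ℝ)) * ∑ j ∈ Finset.Icc 1 Rhat, that j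
          - (1 / (R : ℝ)) * ∑ j ∈ Finset.Icc 1 R, t j| := by
  have hR0 : (0:ℝ) < R := by exact_mod_cast hR
  have hRh : 1 ≤ Rhat := le_of_lt (lt_of_le_of_lt hR hRRhat)
  have hRh0 : (0:ℝ) < Rhat := by exact_mod_cast hRh
  set S1 : ℝ := ∑ j ∈ Finset.Icc 1 R, t j with hS1def
  set S2 : ℝ := ∑ j ∈ Finset.Ioc R Rhat, t j with hS2def
  set c : ℝ := t (R + 1) with hcdef
  -- sum split
  have key : ∀ f : ℕ → ℝ, ∑ j ∈ Finset.Icc 1 Rhat, f j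
      = ∑ j ∈ Finset.Icc 1 R, f j + ∑ j ∈ Finset.Ioc R Rhat, f j := by
    intro f
    rw [show (1:ℕ) = 0 + 1 from rfl, Finset.Icc_add_one_left_eq_Ioc, Finset.Icc_add_one_left_eq_Ioc,
      Finset.sum_Ioc_consecutive _ (Nat.zero_le R) (le_of_lt hRRhat)]
  have hS1le : S1 ≤ (R:ℝ) * c := by
    calc S1 ≤ ∑ j ∈ Finset.Icc 1 R, c := by
          apply Finset.sum_le_sum
          intro j hj
          have hj' := Finset.mem_Icc.mp hj
          exact hmono j (R+1) hj'.1 (by omega)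
      _ = (R:ℝ) * c := by
          rw [Finset.sum_const, Nat.card_Icc]
          simp [nsmul_eq_mul]
  have hS2ge : ((Rhat:ℝ) - R) * c ≤ S2 := by
    have : ∑ j ∈ Finset.Ioc R Rhat, c ≤ S2 := by
      apply Finset.sum_le_sum
      intro j hj
      exact hmono (R+1) j (by omega) (by
        have := (Finset.mem_Ioc.mp hj).1; omega)
    calc ((Rhat:ℝ) - R) * c = ∑ j ∈ Finset.Ioc R Rhat, c := by
          rw [Finset.sum_const, Nat.card_Ioc, nsmul_eq_mul,
            Nat.cast_sub (le_of_lt hRRhat)]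
      _ ≤ S2 := this
  -- first part
  have h1 : 0 ≤ c - (1 / (R:ℝ)) * S1 := by
    rw [sub_nonneg, one_div, inv_mul_le_iff₀ hR0]
    exact hS1le
  refine ⟨h1, ?_⟩
  have hT : ∑ j ∈ Finset.Icc 1 Rhat, t j = S1 + S2 := key t
  have hThat : ∑ j ∈ Finset.Icc 1 Rhat, that j
      = (S1 + S2) + ∑ j ∈ Finset.Icc 1 Rhat, (that j - t j) := by
    rw [← hT]
    rw [← Finset.sum_add_distrib]
    simp
  set D : ℝ := ∑ j ∈ Finset.Icc 1 Rhat, (that j - t j) with hDdef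
  have hX : (1 - (R:ℝ)/Rhat) * (c - (1/(R:ℝ)) * S1)
      ≤ (1/(Rhat:ℝ)) * (S1 + S2) - (1/(R:ℝ)) * S1 := by
    have e1 : (1 - (R:ℝ)/Rhat) * (c - (1/(R:ℝ))*S1)
        = (((Rhat:ℝ) - R)*((R:ℝ)*c - S1))/((Rhat:ℝ)*R) := by
      rw [eq_div_iff (by positivity)]
      field_simp
      all_goals tauto
    have e2 : (1/(Rhat:ℝ))*(S1+S2) - (1/(R:ℝ))*S1
        = ((R:ℝ)*(S1+S2) - (Rhat:ℝ)*S1)/((Rhat:ℝ)*R) := by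
      rw [eq_div_iff (by positivity)]
      field_simp
      all_goals tauto
    rw [e1, e2, div_le_div_iff₀ (by positivity) (by positivity)]
    nlinarith [mul_le_mul_of_nonneg_left hS2ge (le_of_lt hR0), hS1le,
      mul_pos hRh0 hR0]
  rw [hThat]
  have habs : |(1/(Rhat:ℝ)) * ((S1 + S2) + D) - (1/(R:ℝ)) * S1|
      ≥ ((1/(Rhat:ℝ)) * (S1 + S2) - (1/(R:ℝ)) * S1) + (1/(Rhat:ℝ)) * D := by
    have : (1/(Rhat:ℝ)) * ((S1 + S2) + D) - (1/(R:ℝ)) * S1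
        = ((1/(Rhat:ℝ)) * (S1 + S2) - (1/(R:ℝ)) * S1) + (1/(Rhat:ℝ)) * D := by
      ring
    rw [this]
    exact le_abs_self _
  have hd : -((1/(Rhat:ℝ)) * |D|) ≤ (1/(Rhat:ℝ)) * D := by
    have := neg_abs_le D
    have h0 : (0:ℝ) ≤ 1/(Rhat:ℝ) := by positivity
    nlinarith
  linarith
end

section
/- Let ξ₀₀, ξ₀₁, ξ₁₀, ξ₁₁ be positive real numbers and let f₁, f₂ : (0,1) → (0,∞) be non-increasing functions. Define Lfdr(x, y) = (ξ₀₀ + ξ₀₁ f₂(y) + ξ₁₀ f₁(x)) / (ξ₀₀ + ξ₀₁ f₂(y) + ξ₁₀ f₁(x) + ξ₁₁ f₁(x) f₂(y)) for (x, y) ∈ (0,1)². Then Lfdr is non-decreasing in x for each fixed y, and non-decreasing in y for each fixed x. -/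

lemma lfdr_key (ξ₀₀ ξ₀₁ ξ₁₀ ξ₁₁ a a' b : ℝ)
    (h00 : 0 < ξ₀₀) (h01 : 0 < ξ₀₁) (h10 : 0 < ξ₁₀) (h11 : 0 < ξ₁₁)
    (ha : 0 < a) (ha' : 0 < a') (hb : 0 < b) (h : a' ≤ a) :
    (ξ₀₀ + ξ₀₁ * b + ξ₁₀ * a) / (ξ₀₀ + ξ₀₁ * b + ξ₁₀ * a + ξ₁₁ * a * b) ≤
    (ξ₀₀ + ξ₀₁ * b + ξ₁₀ * a') / (ξ₀₀ + ξ₀₁ * b + ξ₁₀ * a' + ξ₁₁ * a' * b) := by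
  rw [div_le_div_iff₀ (by positivity) (by positivity)]
  nlinarith [mul_nonneg (mul_nonneg (mul_pos h11 hb).le
    (by positivity : (0:ℝ) ≤ ξ₀₀ + ξ₀₁ * b)) (sub_nonneg.2 h)]

/-- Monotonicity of the local false discovery rate: with positive mixture weights
`ξ₀₀, ξ₀₁, ξ₁₀, ξ₁₁` and non-increasing positive non-null densities `f₁, f₂` on (0,1),
`Lfdr(x,y) = (ξ₀₀ + ξ₀₁ f₂(y) + ξ₁₀ f₁(x)) /
             (ξ₀₀ + ξ₀₁ f₂(y) + ξ₁₀ f₁(x) + ξ₁₁ f₁(x) f₂(y))`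
is non-decreasing in `x` for each fixed `y ∈ (0,1)` and non-decreasing in `y` for each
fixed `x ∈ (0,1)`. -/
theorem lfdr_monotone (ξ₀₀ ξ₀₁ ξ₁₀ ξ₁₁ : ℝ)
    (h00 : 0 < ξ₀₀) (h01 : 0 < ξ₀₁) (h10 : 0 < ξ₁₀) (h11 : 0 < ξ₁₁)
    (f₁ f₂ : ℝ → ℝ)
    (hf₁pos : ∀ x ∈ Set.Ioo (0 : ℝ) 1, 0 < f₁ x)
    (hf₂pos : ∀ y ∈ Set.Ioo (0 : ℝ) 1, 0 < f₂ y)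
    (hf₁mono : ∀ x ∈ Set.Ioo (0 : ℝ) 1, ∀ x' ∈ Set.Ioo (0 : ℝ) 1, x ≤ x' → f₁ x' ≤ f₁ x)
    (hf₂mono : ∀ y ∈ Set.Ioo (0 : ℝ) 1, ∀ y' ∈ Set.Ioo (0 : ℝ) 1, y ≤ y' → f₂ y' ≤ f₂ y)
    (Lfdr : ℝ → ℝ → ℝ)
    (hL : ∀ x y, Lfdr x y = (ξ₀₀ + ξ₀₁ * f₂ y + ξ₁₀ * f₁ x) /
        (ξ₀₀ + ξ₀₁ * f₂ y + ξ₁₀ * f₁ x + ξ₁₁ * f₁ x * f₂ y)) :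
    (∀ y ∈ Set.Ioo (0 : ℝ) 1, ∀ x ∈ Set.Ioo (0 : ℝ) 1, ∀ x' ∈ Set.Ioo (0 : ℝ) 1,
      x ≤ x' → Lfdr x y ≤ Lfdr x' y) ∧
    (∀ x ∈ Set.Ioo (0 : ℝ) 1, ∀ y ∈ Set.Ioo (0 : ℝ) 1, ∀ y' ∈ Set.Ioo (0 : ℝ) 1,
      y ≤ y' → Lfdr x y ≤ Lfdr x y') := by
  constructor
  · intro y hy x hx x' hx' hxx
    rw [hL, hL]
    exact lfdr_key _ _ _ _ _ _ _ h00 h01 h10 h11 (hf₁pos x hx) (hf₁pos x' hx')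
      (hf₂pos y hy) (hf₁mono x hx x' hx' hxx)
  · intro x hx y hy y' hy' hyy
    rw [hL, hL]
    have := lfdr_key ξ₀₀ ξ₁₀ ξ₀₁ ξ₁₁ (f₂ y) (f₂ y') (f₁ x) h00 h10 h01 h11
      (hf₂pos y hy) (hf₂pos y' hy') (hf₁pos x hx) (hf₂mono y hy y' hy' hyy)
    calc (ξ₀₀ + ξ₀₁ * f₂ y + ξ₁₀ * f₁ x) /
        (ξ₀₀ + ξ₀₁ * f₂ y + ξ₁₀ * f₁ x + ξ₁₁ * f₁ x * f₂ y)
        = (ξ₀₀ + ξ₁₀ * f₁ x + ξ₀₁ * f₂ y) /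
          (ξ₀₀ + ξ₁₀ * f₁ x + ξ₀₁ * f₂ y + ξ₁₁ * f₂ y * f₁ x) := by ring_nf
      _ ≤ (ξ₀₀ + ξ₁₀ * f₁ x + ξ₀₁ * f₂ y') /
          (ξ₀₀ + ξ₁₀ * f₁ x + ξ₀₁ * f₂ y' + ξ₁₁ * f₂ y' * f₁ x) := this
      _ = (ξ₀₀ + ξ₀₁ * f₂ y' + ξ₁₀ * f₁ x) /
          (ξ₀₀ + ξ₀₁ * f₂ y' + ξ₁₀ * f₁ x + ξ₁₁ * f₁ x * f₂ y') := by ring_nf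
end
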